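/- arXiv:2404.19227 — 2 statements merged into one kernel-verified Lean document; each statement's English description precedes it below -/
import Mathlib

section
/- Let E be a real inner product space, and let c ∈ E be nonzero. For every nonzero x ∈ E, the norm of the gradient at x of the cosine-similarity map y ↦ ⟪y, c⟫ / (‖y‖ · ‖c‖) is at most 1 / ‖x‖. -/
open InnerProductSpace

lemma hasFDerivAt_norm' {E : Type*} [NormedAddCommGroup E] [InnerProductSpace ℝ E]
    (x : E) (hx : x ≠ 0) :
    HasFDerivAt (fun y : E => ‖y‖) (‖x‖⁻¹ • innerSL ℝ x) x := by
  have hx' : (0:ℝ) < ‖x‖ := norm_pos_iff.mpr hx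
  have h1 : HasFDerivAt (fun y : E => ‖y‖ ^ 2) (2 • innerSL ℝ x) x :=
    (hasStrictFDerivAt_norm_sq x).hasFDerivAt
  have h2 := (Real.hasDerivAt_sqrt (by positivity : ‖x‖ ^ 2 ≠ 0)).comp_hasFDerivAt x h1
  have heq : ((fun x => Real.sqrt x) ∘ fun y : E => ‖y‖ ^ 2) = fun y : E => ‖y‖ := by
    funext y; simp [Real.sqrt_sq (norm_nonneg y)]
  rw [heq] at h2
  refine h2.congr_fderiv ?_
  rw [Real.sqrt_sq hx'.le]
  ext h
  simp [ContinuousLinearMap.smul_apply, smul_smul]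
  field_simp

theorem cosine_similarity_gradient_norm_le
    {E : Type*} [NormedAddCommGroup E] [InnerProductSpace ℝ E] [CompleteSpace E]
    (c : E) (hc : c ≠ 0) (x : E) (hx : x ≠ 0) :
    ‖gradient (fun y => (inner ℝ y c : ℝ) / (‖y‖ * ‖c‖)) x‖ ≤ 1 / ‖x‖ := by
  have hxn : (0:ℝ) < ‖x‖ := norm_pos_iff.mpr hx
  have hcn : (0:ℝ) < ‖c‖ := norm_pos_iff.mpr hc
  set t : ℝ := inner ℝ x c with ht
  set v : E := (‖x‖ * ‖c‖)⁻¹ • c - (t / (‖x‖ ^ 3 * ‖c‖)) • x with hv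
  -- derivative of numerator
  have h1 : HasFDerivAt (fun y : E => (inner ℝ y c : ℝ)) (innerSL ℝ c) x := by
    have : (fun y : E => (inner ℝ y c : ℝ)) = fun y : E => innerSL ℝ c y := by
      funext y; exact real_inner_comm _ _
    rw [this]
    exact (innerSL ℝ c).hasFDerivAt
  -- derivative of denominator
  have h2 : HasFDerivAt (fun y : E => ‖y‖ * ‖c‖) ((‖c‖ * ‖x‖⁻¹) • innerSL ℝ x) x := by
    have := (hasFDerivAt_norm' x hx).mul_const ‖c‖
    refine this.congr_fderiv ?_
    ext h; simp; ring
  have hden : ‖x‖ * ‖c‖ ≠ 0 := by positivity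
  have h3 := (hasDerivAt_inv hden).comp_hasFDerivAt x h2
  have h4 := h1.mul h3
  have hF : HasFDerivAt (fun y : E => (inner ℝ y c : ℝ) / (‖y‖ * ‖c‖)) (toDual ℝ E v) x := by
    have heq : (fun y : E => (inner ℝ y c : ℝ) / (‖y‖ * ‖c‖))
        = fun y : E => (inner ℝ y c : ℝ) * ((fun z => z⁻¹) ∘ fun y : E => ‖y‖ * ‖c‖) y := by
      funext y; simp [div_eq_mul_inv, Function.comp]
    rw [heq]
    refine h4.congr_fderiv ?_
    ext h
    simp [hv, inner_sub_left, real_inner_smul_left, real_inner_comm x h, smul_smul]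
    field_simp
    ring
  have hG : HasGradientAt (fun y : E => (inner ℝ y c : ℝ) / (‖y‖ * ‖c‖)) v x :=
    (hasGradientAt_iff_hasFDerivAt).mpr hF
  rw [hG.gradient]
  -- norm bound
  have hvv : ‖v‖ ^ 2 = (1/‖x‖)^2 - t^2 / (‖x‖^4 * ‖c‖^2) := by
    rw [← real_inner_self_eq_norm_sq, hv]
    simp only [inner_sub_left, inner_sub_right, real_inner_smul_left, real_inner_smul_right,
      real_inner_comm c x, ← ht]
    rw [real_inner_self_eq_norm_sq x, real_inner_self_eq_norm_sq c, real_inner_comm x c]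
    field_simp
    ring
  have ht2 : 0 ≤ t^2 / (‖x‖^4 * ‖c‖^2) := by positivity
  nlinarith [norm_nonneg v, hxn, one_div_pos.mpr hxn]
end

section
/- (Certified robustness of the Espresso filter, Theorem 1.) Let E be a real inner product space, τ > 0, c^u, c^a ∈ E nonzero, and g(x) := exp(τ·cos(x,c^u)) / (exp(τ·cos(x,c^u)) + exp(τ·cos(x,c^a))) where cos(x,c) := ⟪x, c⟫ / (‖x‖ · ‖c‖). Let Γ ∈ ℝ, let x ∈ E be nonzero with g(x) > Γ. Then for every δ ∈ E with ‖δ‖ ≤ (1 − τ/(τ + 2·(g(x) − Γ))) · ‖x‖, one has g(x + δ) ≥ Γ; that is, the filter's decision g(·) > Γ vs. g(·) ≤ Γ is not flipped from 'above threshold' by any perturbation of norm at most (1 − τ/(τ + 2·|g(x) − Γ|)) · ‖x‖. -/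
open Real


noncomputable def sigm (t : ℝ) : ℝ := (1 + Real.exp (-t))⁻¹

lemma sigm_hasDerivAt (t : ℝ) :
    HasDerivAt sigm (Real.exp (-t) / (1 + Real.exp (-t)) ^ 2) t := by
  have h1 : HasDerivAt (fun s : ℝ => 1 + Real.exp (-s)) (-Real.exp (-t)) t := by
    simpa using (((Real.hasDerivAt_exp (-t)).comp t ((hasDerivAt_id t).neg)).const_add 1)
  have hne : (1 : ℝ) + Real.exp (-t) ≠ 0 := by positivity
  have h2 := h1.inv hne
  simp only [neg_div, neg_neg] at h2
  exact h2

lemma sigm_lipschitz (a b : ℝ) : |sigm a - sigm b| ≤ |a - b| / 4 := by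
  have hdiff : Differentiable ℝ sigm := fun t => (sigm_hasDerivAt t).differentiableAt
  have hlip : LipschitzWith (1/4 : NNReal) sigm := by
    apply lipschitzWith_of_nnnorm_deriv_le hdiff
    intro t
    have hd : deriv sigm t = Real.exp (-t) / (1 + Real.exp (-t)) ^ 2 :=
      (sigm_hasDerivAt t).deriv
    rw [← NNReal.coe_le_coe, coe_nnnorm, hd]
    push_cast
    have h0 : (0:ℝ) < Real.exp (-t) := Real.exp_pos _
    have key : Real.exp (-t) / (1 + Real.exp (-t)) ^ 2 ≤ 1/4 := by
      rw [div_le_div_iff₀ (by positivity) (by norm_num)]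
      nlinarith [sq_nonneg (1 - Real.exp (-t))]
    rw [Real.norm_eq_abs, abs_of_nonneg (by positivity)]
    linarith
  have h := hlip.dist_le_mul a b
  rw [Real.dist_eq, Real.dist_eq] at h
  have h4 : ((1/4 : NNReal) : ℝ) = 1/4 := by norm_num
  rw [h4] at h
  linarith [abs_nonneg (a - b)]


lemma dunkl_williams {E : Type*} [NormedAddCommGroup E] [InnerProductSpace ℝ E]
    {x y : E} (hx : x ≠ 0) (hy : y ≠ 0) :
    ‖‖y‖⁻¹ • y - ‖x‖⁻¹ • x‖ ≤ 2 * ‖y - x‖ / (‖x‖ + ‖y‖) := by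
  have ha : (0:ℝ) < ‖x‖ := norm_pos_iff.mpr hx
  have hb : (0:ℝ) < ‖y‖ := norm_pos_iff.mpr hy
  have hcs : -(‖x‖ * ‖y‖) ≤ (inner ℝ x y : ℝ) := neg_le_of_abs_le (abs_real_inner_le_norm x y)
  have hab : (0:ℝ) < ‖x‖ + ‖y‖ := by linarith
  rw [← pow_le_pow_iff_left₀ (norm_nonneg _) (by positivity) (two_ne_zero)]
  have e1 : ‖‖y‖⁻¹ • y - ‖x‖⁻¹ • x‖ ^ 2 = 2 - 2 * (inner ℝ x y : ℝ) / (‖x‖ * ‖y‖) := by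
    rw [norm_sub_sq_real]
    simp only [norm_smul, norm_inv, norm_norm, real_inner_smul_left, real_inner_smul_right]
    rw [real_inner_comm y x]
    field_simp
    ring
  have e2 : ‖y - x‖ ^ 2 = ‖x‖ ^ 2 - 2 * (inner ℝ x y : ℝ) + ‖y‖ ^ 2 := by
    rw [norm_sub_sq_real, real_inner_comm y x]; ring
  rw [e1, div_pow, mul_pow, e2]
  rw [le_div_iff₀ (by positivity)]
  have key : (2 - 2 * (inner ℝ x y : ℝ) / (‖x‖ * ‖y‖)) * (‖x‖ + ‖y‖) ^ 2 ≤
      2 ^ 2 * (‖x‖ ^ 2 - 2 * (inner ℝ x y : ℝ) + ‖y‖ ^ 2) := by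
    have hrw : 2 - 2 * (inner ℝ x y : ℝ) / (‖x‖ * ‖y‖) =
        (2 * (‖x‖ * ‖y‖) - 2 * (inner ℝ x y : ℝ)) / (‖x‖ * ‖y‖) := by
      field_simp
    rw [hrw, div_mul_eq_mul_div, div_le_iff₀ (by positivity)]
    nlinarith [mul_le_mul_of_nonneg_left hcs (sq_nonneg (‖x‖ - ‖y‖))]
  linarith

/-- Cosine similarity of two vectors in a real inner product space. -/
noncomputable def cosSim {E : Type*} [NormedAddCommGroup E] [InnerProductSpace ℝ E]
    (x c : E) : ℝ :=
  (inner ℝ x c : ℝ) / (‖x‖ * ‖c‖)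

/-- The Espresso confidence function
`g(x) = exp(τ·cos(x,cᵘ)) / (exp(τ·cos(x,cᵘ)) + exp(τ·cos(x,cᵃ)))`. -/
noncomputable def espressoG {E : Type*} [NormedAddCommGroup E] [InnerProductSpace ℝ E]
    (τ : ℝ) (cu ca : E) (x : E) : ℝ :=
  Real.exp (τ * cosSim x cu) /
    (Real.exp (τ * cosSim x cu) + Real.exp (τ * cosSim x ca))

lemma espressoG_eq_sigm {E : Type*} [NormedAddCommGroup E] [InnerProductSpace ℝ E]
    (τ : ℝ) (cu ca : E) (x : E) :
    espressoG τ cu ca x = sigm (τ * cosSim x cu - τ * cosSim x ca) := by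
  unfold espressoG sigm
  rw [neg_sub, Real.exp_sub]
  have h1 : Real.exp (τ * cosSim x cu) ≠ 0 := (Real.exp_pos _).ne'
  have h2 : (0:ℝ) < Real.exp (τ * cosSim x cu) + Real.exp (τ * cosSim x ca) := by positivity
  field_simp

lemma cosSim_eq_inner_normalized {E : Type*} [NormedAddCommGroup E] [InnerProductSpace ℝ E]
    (x c : E) : cosSim x c = (inner ℝ (‖x‖⁻¹ • x) (‖c‖⁻¹ • c) : ℝ) := by
  rw [real_inner_smul_left, real_inner_smul_right]
  unfold cosSim
  rw [div_eq_mul_inv, mul_inv]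
  ring

lemma cosSim_diff_le {E : Type*} [NormedAddCommGroup E] [InnerProductSpace ℝ E]
    {x y : E} (c : E) (hc : c ≠ 0) :
    |cosSim y c - cosSim x c| ≤ ‖‖y‖⁻¹ • y - ‖x‖⁻¹ • x‖ := by
  rw [cosSim_eq_inner_normalized y c, cosSim_eq_inner_normalized x c, ← inner_sub_left]
  have := abs_real_inner_le_norm (‖y‖⁻¹ • y - ‖x‖⁻¹ • x) (‖c‖⁻¹ • c)
  have hnc : ‖‖c‖⁻¹ • c‖ = 1 := by
    rw [norm_smul, norm_inv, norm_norm]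
    field_simp [norm_pos_iff.mpr hc |>.ne']
  rw [hnc, mul_one] at this
  exact this

/-- Certified robustness of the Espresso filter (Theorem 1). -/
theorem espresso_certified_robustness
    {E : Type*} [NormedAddCommGroup E] [InnerProductSpace ℝ E] [CompleteSpace E]
    (τ : ℝ) (hτ : 0 < τ) (cu ca : E) (hcu : cu ≠ 0) (hca : ca ≠ 0)
    (Γ : ℝ) (x : E) (hx : x ≠ 0) (hgx : Γ < espressoG τ cu ca x) :
    ∀ δ : E,
      ‖δ‖ ≤ (1 - τ / (τ + 2 * (espressoG τ cu ca x - Γ))) * ‖x‖ →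
      Γ ≤ espressoG τ cu ca (x + δ) := by
  intro δ hδ
  set ε : ℝ := espressoG τ cu ca x - Γ with hεdef
  have hε : 0 < ε := by simp [hεdef]; linarith
  have ha : (0:ℝ) < ‖x‖ := norm_pos_iff.mpr hx
  have hτ2ε : 0 < τ + 2 * ε := by linarith
  have hδa : ‖δ‖ ≤ 2 * ε / (τ + 2 * ε) * ‖x‖ := by
    have : 1 - τ / (τ + 2 * ε) = 2 * ε / (τ + 2 * ε) := by field_simp; ring
    rw [this] at hδ; exact hδ
  have key : (τ + 2 * ε) * ‖δ‖ ≤ 2 * ε * ‖x‖ := by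
    rw [div_mul_eq_mul_div, le_div_iff₀ hτ2ε] at hδa
    linarith [hδa]
  have hδlt : ‖δ‖ < ‖x‖ := by nlinarith
  set y : E := x + δ with hydef
  have hyn : ‖x‖ - ‖δ‖ ≤ ‖y‖ := by
    have := norm_add_le y (-δ)
    simp [hydef] at this ⊢
    linarith [norm_add_le (x + δ) (-δ), norm_neg δ]
  have hy0 : y ≠ 0 := by
    intro h
    rw [h] at hyn
    simp at hyn
    linarith
  have hD : ‖‖y‖⁻¹ • y - ‖x‖⁻¹ • x‖ ≤ 2 * ‖δ‖ / (‖x‖ + ‖y‖) := by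
    have := dunkl_williams hx hy0
    have hyx : y - x = δ := by simp [hydef]
    rwa [hyx] at this
  have hD2 : ‖‖y‖⁻¹ • y - ‖x‖⁻¹ • x‖ ≤ 2 * ‖δ‖ / (2 * ‖x‖ - ‖δ‖) := by
    refine hD.trans ?_
    apply div_le_div_of_nonneg_left (by positivity) (by linarith) (by linarith)
  -- difference of g values
  have hgdiff : |espressoG τ cu ca y - espressoG τ cu ca x| ≤
      τ * ‖‖y‖⁻¹ • y - ‖x‖⁻¹ • x‖ / 2 := by
    rw [espressoG_eq_sigm, espressoG_eq_sigm]
    refine (sigm_lipschitz _ _).trans ?_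
    have h1 := cosSim_diff_le (x := x) (y := y) cu hcu
    have h2 := cosSim_diff_le (x := x) (y := y) ca hca
    have habs : |(τ * cosSim y cu - τ * cosSim y ca) - (τ * cosSim x cu - τ * cosSim x ca)|
        ≤ τ * (2 * ‖‖y‖⁻¹ • y - ‖x‖⁻¹ • x‖) := by
      have : (τ * cosSim y cu - τ * cosSim y ca) - (τ * cosSim x cu - τ * cosSim x ca)
          = τ * ((cosSim y cu - cosSim x cu) - (cosSim y ca - cosSim x ca)) := by ring
      rw [this, abs_mul, abs_of_pos hτ]
      have := abs_sub (cosSim y cu - cosSim x cu) (cosSim y ca - cosSim x ca)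
      nlinarith [abs_sub_abs_le_abs_sub (cosSim y cu - cosSim x cu) (cosSim y ca - cosSim x ca)]
    linarith
  have hbound : τ * ‖‖y‖⁻¹ • y - ‖x‖⁻¹ • x‖ / 2 ≤ ε := by
    have h1 : τ * ‖‖y‖⁻¹ • y - ‖x‖⁻¹ • x‖ / 2 ≤ τ * (2 * ‖δ‖ / (2 * ‖x‖ - ‖δ‖)) / 2 := by
      have := mul_le_mul_of_nonneg_left hD2 hτ.le
      linarith
    refine h1.trans ?_
    have h2 : τ * (2 * ‖δ‖ / (2 * ‖x‖ - ‖δ‖)) / 2 = τ * ‖δ‖ / (2 * ‖x‖ - ‖δ‖) := by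
      have hDne : (2 * ‖x‖ - ‖δ‖) ≠ 0 := by linarith
      field_simp
    rw [h2, div_le_iff₀ (by linarith)]
    nlinarith [mul_nonneg hε.le (norm_nonneg δ)]
  have := abs_le.mp hgdiff
  simp only [hεdef] at hbound ⊢
  linarith [this.1]
end
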